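/- Let Φ be a root system with base Δ, fundamental weight λ_p, Weyl vector ρ, longest element w_0 of W, parabolic subset Δ_p = Δ \ {α_p} with longest element w_p of W_p, and c_p = 2⟨λ_p - ρ_p, α_p^∨⟩. For a subset A ⊆ Φ and w ∈ W define S_{p,A}(s; w) = { ⟨λ_p, α^∨⟩ s + ⟨ρ, α^∨⟩ : α ∈ (w^{-1}A) \ Δ_p } (as a multiset of affine-linear functions of s). Then for A = Δ or A = Φ^-, one has S_{p,A}(-c_p - s; w) = S_{p,A}(s; w_0 w w_p). -/

import Mathlib

open scoped RealInnerProductSpace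

/-- A (reduced, crystallographic) root system `Φ` in a real inner product
space, together with a chosen base `Δ`. -/
structure RootSystemBase (V : Type*) [NormedAddCommGroup V]
    [InnerProductSpace ℝ V] where
  Φ : Set V
  finite : Φ.Finite
  zero_not_mem : (0 : V) ∉ Φ
  neg_mem : ∀ α ∈ Φ, -α ∈ Φ
  reduced : ∀ α ∈ Φ, ∀ t : ℝ, t • α ∈ Φ → t = 1 ∨ t = -1
  crystallographic : ∀ α ∈ Φ, ∀ β ∈ Φ, ∃ n : ℤ, (n : ℝ) = 2 * ⟪α, β⟫ / ⟪α, α⟫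
  reflect_mem : ∀ α ∈ Φ, ∀ β ∈ Φ, β - (2 * ⟪α, β⟫ / ⟪α, α⟫) • α ∈ Φ
  Δ : Finset V
  base_subset : ↑Δ ⊆ Φ
  base_indep : LinearIndependent ℝ (fun α : Δ => (α : V))
  base_pos_neg : ∀ α ∈ Φ,
    (∃ c : V → ℝ, (∀ β, 0 ≤ c β) ∧ α = ∑ β ∈ Δ, c β • β) ∨
    (∃ c : V → ℝ, (∀ β, 0 ≤ c β) ∧ α = -∑ β ∈ Δ, c β • β)

namespace RootSystemBase

variable {V : Type*} [NormedAddCommGroup V] [InnerProductSpace ℝ V]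
  (R : RootSystemBase V)

/-- The positive roots determined by the base `Δ`. -/
def posRoots : Set V :=
  {α ∈ R.Φ | ∃ c : V → ℝ, (∀ β, 0 ≤ c β) ∧ α = ∑ β ∈ R.Δ, c β • β}

/-- The negative roots determined by the base `Δ`. -/
def negRoots : Set V := {α | -α ∈ R.posRoots}

/-- The pairing `⟨x, α^∨⟩ = 2⟪x, α⟫/⟪α, α⟫` with the coroot `α^∨`. -/
noncomputable def copair (x α : V) : ℝ := 2 * ⟪x, α⟫ / ⟪α, α⟫

/-- The Weyl group: the subgroup of linear automorphisms of `V` generated by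
the reflections `s_α : x ↦ x - ⟨x, α^∨⟩ α` in the roots `α ∈ Φ`. -/
def weylGroup : Subgroup (V ≃ₗ[ℝ] V) :=
  Subgroup.closure
    {w | ∃ α ∈ R.Φ, ∀ x, w x = x - (2 * ⟪α, x⟫ / ⟪α, α⟫) • α}

/-- The length `ℓ(w) = |Φ_w|` where `Φ_w = Φ⁺ ∩ w⁻¹Φ⁻`. -/
noncomputable def length (w : V ≃ₗ[ℝ] V) : ℕ :=
  (R.posRoots ∩ ⇑w ⁻¹' R.negRoots).ncard

/-- `w₀` is a longest element of the Weyl group. -/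
def IsLongest (w₀ : V ≃ₗ[ℝ] V) : Prop :=
  w₀ ∈ R.weylGroup ∧ ∀ w ∈ R.weylGroup, R.length w ≤ R.length w₀

/-- The parabolic root subsystem `Φ_p` generated by `Δ_p = Δ \ {α_p}`:
the roots in the span of `Δ_p`. -/
def paraRoots (αp : V) : Set V :=
  R.Φ ∩ (Submodule.span ℝ (↑R.Δ \ {αp}) : Set V)

/-- The parabolic Weyl group `W_p`, generated by the reflections in `Φ_p`. -/
def paraWeylGroup (αp : V) : Subgroup (V ≃ₗ[ℝ] V) :=
  Subgroup.closure
    {w | ∃ α ∈ R.paraRoots αp, ∀ x, w x = x - (2 * ⟪α, x⟫ / ⟪α, α⟫) • α}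

/-- The length function of the parabolic subsystem `Φ_p`. -/
noncomputable def paraLength (αp : V) (w : V ≃ₗ[ℝ] V) : ℕ :=
  ((R.posRoots ∩ R.paraRoots αp) ∩ ⇑w ⁻¹' (R.negRoots ∩ R.paraRoots αp)).ncard

/-- `w_p` is a longest element of the parabolic Weyl group `W_p`. -/
def IsParaLongest (αp : V) (wp : V ≃ₗ[ℝ] V) : Prop :=
  wp ∈ R.paraWeylGroup αp ∧
    ∀ w ∈ R.paraWeylGroup αp, R.paraLength αp w ≤ R.paraLength αp wp

end RootSystemBase

namespace SInvAux
open RootSystemBase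

variable {V : Type*} [NormedAddCommGroup V] [InnerProductSpace ℝ V]

lemma root_ne_zero (R : RootSystemBase V) {α : V} (hα : α ∈ R.Φ) : α ≠ 0 :=
  fun h => R.zero_not_mem (h ▸ hα)

lemma inner_self_pos' (R : RootSystemBase V) {α : V} (hα : α ∈ R.Φ) : 0 < ⟪α, α⟫ :=
  lt_of_le_of_ne real_inner_self_nonneg
    (fun h => root_ne_zero R hα (inner_self_eq_zero.mp h.symm))

lemma copair_neg_right (x α : V) : copair x (-α) = - copair x α := by
  simp [copair, neg_div]

lemma copair_smul_left (c : ℝ) (x α : V) : copair (c • x) α = c * copair x α := by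
  simp [copair, real_inner_smul_left]; ring

lemma copair_sub_left (x y α : V) : copair (x - y) α = copair x α - copair y α := by
  simp [copair, inner_sub_left]; ring

lemma copair_add_left (x y α : V) : copair (x + y) α = copair x α + copair y α := by
  simp [copair, inner_add_left]; ring

lemma copair_self (R : RootSystemBase V) {α : V} (hα : α ∈ R.Φ) : copair α α = 2 := by
  have := (inner_self_pos' R hα).ne'
  rw [copair, mul_div_assoc, div_self this, mul_one]

lemma copair_eq_zero_iff (R : RootSystemBase V) {α : V} (hα : α ∈ R.Φ) (x : V) :
    copair x α = 0 ↔ ⟪x, α⟫ = 0 := by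
  have := (inner_self_pos' R hα).ne'
  constructor
  · intro h
    rw [copair, div_eq_zero_iff] at h
    simpa using h.resolve_right this
  · intro h; simp [copair, h]

lemma coeff_unique (R : RootSystemBase V) {c d : V → ℝ}
    (h : ∑ β ∈ R.Δ, c β • β = ∑ β ∈ R.Δ, d β • β) : ∀ β ∈ R.Δ, c β = d β := by
  have hli := linearIndependent_iff'.mp R.base_indep Finset.univ
    (fun i => c i - d i) ?_
  · intro β hβ
    have := hli ⟨β, hβ⟩ (Finset.mem_univ _)
    linarith
  · have : ∑ i : R.Δ, (c i - d i) • (i : V)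
        = ∑ β ∈ R.Δ, (c β - d β) • β := by
      rw [← Finset.sum_coe_sort R.Δ (fun β => (c β - d β) • β)]
    rw [this]
    simp only [sub_smul, Finset.sum_sub_distrib, h, sub_self]

lemma posRoots_subset (R : RootSystemBase V) : R.posRoots ⊆ R.Φ := fun _ h => h.1

lemma negRoots_subset (R : RootSystemBase V) : R.negRoots ⊆ R.Φ := fun α h => by
  have : -α ∈ R.Φ := posRoots_subset R h
  simpa using R.neg_mem _ this

lemma neg_mem_negRoots_iff (R : RootSystemBase V) (α : V) :
    -α ∈ R.negRoots ↔ α ∈ R.posRoots := by simp [negRoots]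

lemma pos_neg_disjoint (R : RootSystemBase V) {α : V}
    (h1 : α ∈ R.posRoots) (h2 : α ∈ R.negRoots) : False := by
  obtain ⟨hΦ, c, hc, hrep⟩ := h1
  obtain ⟨hΦ', d, hd, hrep'⟩ := h2
  have hzero : ∑ β ∈ R.Δ, (c β + d β) • β = ∑ β ∈ R.Δ, (0:ℝ) • β := by
    simp only [add_smul, Finset.sum_add_distrib, zero_smul, Finset.sum_const_zero]
    rw [← hrep]
    rw [← hrep']
    abel
  have := coeff_unique R hzero
  have hc0 : ∀ β ∈ R.Δ, c β = 0 := by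
    intro β hβ
    have h1 := this β hβ
    have := hc β; have := hd β
    linarith
  apply root_ne_zero R hΦ
  rw [hrep]
  exact Finset.sum_eq_zero fun β hβ => by rw [hc0 β hβ, zero_smul]

lemma mem_pos_or_neg (R : RootSystemBase V) {α : V} (h : α ∈ R.Φ) :
    α ∈ R.posRoots ∨ α ∈ R.negRoots := by
  rcases R.base_pos_neg α h with ⟨c, hc, hrep⟩ | ⟨c, hc, hrep⟩
  · exact Or.inl ⟨h, c, hc, hrep⟩
  · exact Or.inr ⟨R.neg_mem _ h, c, hc, by rw [hrep]; simp⟩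

lemma base_mem_pos (R : RootSystemBase V) {β : V} (hβ : β ∈ R.Δ) : β ∈ R.posRoots := by
  classical
  refine ⟨R.base_subset hβ, fun v => if v = β then 1 else 0,
    fun v => by dsimp only; split <;> norm_num, ?_⟩
  rw [show ∀ s : Finset V, ∑ v ∈ s, (if v = β then (1:ℝ) else 0) • v
      = ∑ v ∈ s, (if v = β then v else 0) from fun s => Finset.sum_congr rfl
        (fun v _ => by split <;> simp)]
  rw [Finset.sum_ite_eq' R.Δ β (fun v => v)]
  simp [hβ]

end SInvAux
namespace SInvAux
open RootSystemBase

variable {V : Type*} [NormedAddCommGroup V] [InnerProductSpace ℝ V]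

lemma mulApply (f g : V ≃ₗ[ℝ] V) (x : V) : (f * g) x = f (g x) := rfl

lemma invApply (f : V ≃ₗ[ℝ] V) (x : V) : (f⁻¹) x = f.symm x := rfl

lemma reflect_inner {α : V} (hα : ⟪α, α⟫ ≠ 0) (x y : V) :
    ⟪x - (2 * ⟪α, x⟫ / ⟪α, α⟫) • α, y - (2 * ⟪α, y⟫ / ⟪α, α⟫) • α⟫ = ⟪x, y⟫ := by
  simp only [inner_sub_left, inner_sub_right, real_inner_smul_left, real_inner_smul_right]
  rw [real_inner_comm α x]
  field_simp
  ring

lemma weyl_inner (R : RootSystemBase V) {g : V ≃ₗ[ℝ] V} (hg : g ∈ R.weylGroup) :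
    ∀ x y : V, ⟪g x, g y⟫ = ⟪x, y⟫ := by
  induction hg using Subgroup.closure_induction with
  | mem g hg =>
    obtain ⟨α, hα, hgα⟩ := hg
    intro x y
    rw [hgα x, hgα y]
    exact reflect_inner (inner_self_pos' R hα).ne' x y
  | one => intro x y; rfl
  | mul a b _ _ pa pb =>
    intro x y
    rw [mulApply, mulApply, pa, pb]
  | inv a _ pa =>
    intro x y
    have := pa (a⁻¹ x) (a⁻¹ y)
    rw [invApply, invApply, a.apply_symm_apply, a.apply_symm_apply] at this
    exact this.symm

lemma weyl_maps (R : RootSystemBase V) {g : V ≃ₗ[ℝ] V} (hg : g ∈ R.weylGroup) :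
    ∀ α ∈ R.Φ, g α ∈ R.Φ := by
  induction hg using Subgroup.closure_induction with
  | mem g hg =>
    obtain ⟨α, hα, hgα⟩ := hg
    intro β hβ
    rw [hgα β]
    exact R.reflect_mem α hα β hβ
  | one => intro β hβ; exact hβ
  | mul a b _ _ pa pb =>
    intro β hβ
    rw [mulApply]
    exact pa _ (pb _ hβ)
  | inv a _ pa =>
    intro β hβ
    have hbij : Set.BijOn a R.Φ R.Φ :=
      (R.finite.injOn_iff_bijOn_of_mapsTo (fun x hx => pa x hx)).mp
        (a.injective.injOn)
    obtain ⟨γ, hγ, hγ2⟩ := hbij.surjOn hβ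
    have : a⁻¹ β = γ := by
      rw [← hγ2, invApply, a.symm_apply_apply]
    rw [this]; exact hγ

lemma copair_weyl (R : RootSystemBase V) {g : V ≃ₗ[ℝ] V} (hg : g ∈ R.weylGroup)
    (x y : V) : copair (g x) (g y) = copair x y := by
  unfold copair
  rw [weyl_inner R hg, weyl_inner R hg]

/-- The reflection in `β` as a linear map. -/
noncomputable def reflLM (β : V) : V →ₗ[ℝ] V where
  toFun := fun x => x - (2 * ⟪β, x⟫ / ⟪β, β⟫) • β
  map_add' := fun x y => by
    simp only [inner_add_right]
    rw [show 2 * (⟪β, x⟫ + ⟪β, y⟫) / ⟪β, β⟫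
        = 2 * ⟪β, x⟫ / ⟪β, β⟫ + 2 * ⟪β, y⟫ / ⟪β, β⟫ by ring]
    rw [add_smul]; abel
  map_smul' := fun c x => by
    simp only [real_inner_smul_right, RingHom.id_apply, smul_sub, smul_smul]
    rw [show 2 * (c * ⟪β, x⟫) / ⟪β, β⟫ = c * (2 * ⟪β, x⟫ / ⟪β, β⟫) by ring]

lemma reflLM_involutive (β : V) : Function.Involutive (reflLM β) := by
  intro x
  show reflLM β x - (2 * ⟪β, reflLM β x⟫ / ⟪β, β⟫) • β = x
  by_cases h : ⟪β, β⟫ = 0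
  · have hβ0 : β = 0 := inner_self_eq_zero.mp h
    show (x - _ • β) - _ • β = x
    rw [hβ0]; simp
  · show (x - (2 * ⟪β, x⟫ / ⟪β, β⟫) • β)
        - (2 * ⟪β, x - (2 * ⟪β, x⟫ / ⟪β, β⟫) • β⟫ / ⟪β, β⟫) • β = x
    rw [inner_sub_right, real_inner_smul_right]
    rw [show 2 * (⟪β, x⟫ - 2 * ⟪β, x⟫ / ⟪β, β⟫ * ⟪β, β⟫) / ⟪β, β⟫
        = - (2 * ⟪β, x⟫ / ⟪β, β⟫) by field_simp; ring]
    rw [neg_smul]; abel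

/-- The reflection in `β` as a linear equivalence. -/
noncomputable def reflV (β : V) : V ≃ₗ[ℝ] V :=
  LinearEquiv.ofInvolutive (reflLM β) (reflLM_involutive β)

lemma reflV_apply (β x : V) : reflV β x = x - (2 * ⟪β, x⟫ / ⟪β, β⟫) • β := rfl

lemma reflV_apply' (β x : V) : reflV β x = x - copair x β • β := by
  rw [reflV_apply, copair, real_inner_comm]

lemma reflV_involutive (β : V) : ∀ x, reflV β (reflV β x) = x :=
  reflLM_involutive β

lemma reflV_mem (R : RootSystemBase V) {β : V} (hβ : β ∈ R.Φ) : reflV β ∈ R.weylGroup :=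
  Subgroup.subset_closure ⟨β, hβ, fun x => rfl⟩

lemma reflV_mem_para (R : RootSystemBase V) {αp β : V} (hβ : β ∈ R.paraRoots αp) :
    reflV β ∈ R.paraWeylGroup αp :=
  Subgroup.subset_closure ⟨β, hβ, fun x => rfl⟩

lemma reflV_root_mem (R : RootSystemBase V) {α β : V} (hβ : β ∈ R.Φ) (hα : α ∈ R.Φ) :
    reflV β α ∈ R.Φ := R.reflect_mem β hβ α hα

lemma reflV_self (R : RootSystemBase V) {β : V} (hβ : β ∈ R.Φ) : reflV β β = -β := by
  rw [reflV_apply', copair_self R hβ]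
  rw [show (2:ℝ) • β = β + β from two_smul ℝ β]
  abel

end SInvAux
namespace SInvAux
open RootSystemBase

variable {V : Type*} [NormedAddCommGroup V] [InnerProductSpace ℝ V]

lemma simple_reflect_pos (R : RootSystemBase V) {β γ : V} (hβ : β ∈ R.Δ)
    (hγP : γ ∈ R.posRoots) (hne : γ ≠ β) :
    reflV β γ ∈ R.posRoots ∧ reflV β γ ≠ β := by
  classical
  obtain ⟨hγΦ, c, hc, hrep⟩ := hγP
  have hβΦ : β ∈ R.Φ := R.base_subset hβ
  have hreflΦ : reflV β γ ∈ R.Φ := reflV_root_mem R hβΦ hγΦ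
  -- find a coordinate δ ≠ β with positive coefficient
  have hδ : ∃ δ ∈ R.Δ, δ ≠ β ∧ 0 < c δ := by
    by_contra hcon
    push_neg at hcon
    have hzero : ∀ δ ∈ R.Δ, δ ≠ β → c δ = 0 := fun δ h1 h2 =>
      le_antisymm (le_of_not_gt (fun hlt => absurd hlt (by simpa using hcon δ h1 h2)))
        (hc δ)
    have hγβ : γ = c β • β := by
      rw [hrep, Finset.sum_eq_single β (fun δ h1 h2 => by rw [hzero δ h1 h2, zero_smul])
        (fun h => absurd hβ h)]
    rcases R.reduced β hβΦ (c β) (hγβ ▸ hγΦ) with h1 | h1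
    · exact hne (by rw [hγβ, h1, one_smul])
    · have := hc β; rw [h1] at this; linarith
  obtain ⟨δ, hδΔ, hδβ, hδpos⟩ := hδ
  -- coordinates of the reflected root
  set c' : V → ℝ := fun v => if v = β then c β - copair γ β else c v with hc'
  have hrep2 : reflV β γ = ∑ v ∈ R.Δ, c' v • v := by
    have h1 : ∑ v ∈ R.Δ.erase β, c' v • v = ∑ v ∈ R.Δ.erase β, c v • v :=
      Finset.sum_congr rfl fun v hv => by
        have hv' : v ≠ β := (Finset.mem_erase.mp hv).1
        simp [hc', hv']
    rw [reflV_apply']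
    rw [← Finset.add_sum_erase _ (fun v => c' v • v) hβ, h1]
    have h2 : c' β = c β - copair γ β := by rw [hc']; simp
    rw [h2, hrep, ← Finset.add_sum_erase _ (fun v => c v • v) hβ]
    module
  have hδc' : c' δ = c δ := by rw [hc']; simp [hδβ]
  constructor
  · rcases mem_pos_or_neg R hreflΦ with h | h
    · exact h
    · exfalso
      obtain ⟨hΦ', d, hd, hrepd⟩ := h
      have hrep3 : reflV β γ = ∑ v ∈ R.Δ, (fun v => -(d v)) v • v := by
        have : reflV β γ = -∑ v ∈ R.Δ, d v • v := by
          rw [← hrepd]; simp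
        rw [this, ← Finset.sum_neg_distrib]
        exact Finset.sum_congr rfl fun v _ => by simp
      have := coeff_unique R (hrep2.symm.trans hrep3) δ hδΔ
      rw [hδc'] at this
      have := hd δ
      try simp only at this ⊢
      linarith [this, hδpos, coeff_unique R (hrep2.symm.trans hrep3) δ hδΔ]
  · intro heq
    have : γ = -β := by
      have := reflV_involutive β γ
      rw [heq, reflV_self R hβΦ] at this
      exact this.symm
    have hβP : β ∈ R.posRoots := base_mem_pos R hβ
    have : γ ∈ R.negRoots := by
      rw [this]; exact (neg_mem_negRoots_iff R β).mpr hβP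
    exact pos_neg_disjoint R ⟨hγΦ, c, hc, hrep⟩ this

lemma copair_reflV (R : RootSystemBase V) {β : V} (hβ : β ∈ R.Φ) (γ : V) :
    copair (reflV β γ) β = - copair γ β := by
  rw [reflV_apply', copair_sub_left, copair_smul_left, copair_self R hβ]
  ring

lemma copair_sum {ι : Type*} (s : Finset ι) (f : ι → V) (α : V) :
    copair (∑ i ∈ s, f i) α = ∑ i ∈ s, copair (f i) α := by
  simp only [copair, sum_inner, Finset.sum_div, Finset.mul_sum]

/-- The pairing of the Weyl vector with a simple coroot is 1. -/
lemma copair_rho (R : RootSystemBase V) {β : V} (hβ : β ∈ R.Δ) :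
    copair ((2⁻¹ : ℝ) • ∑ᶠ γ ∈ R.posRoots, γ) β = 1 := by
  classical
  have hPfin : R.posRoots.Finite := R.finite.subset (posRoots_subset R)
  have hβΦ : β ∈ R.Φ := R.base_subset hβ
  set F := hPfin.toFinset with hF
  have hsum : ∑ᶠ γ ∈ R.posRoots, γ = ∑ γ ∈ F, γ := by
    rw [← finsum_mem_coe_finset]
    congr 1
    rw [hF, Set.Finite.coe_toFinset]
  have hβF : β ∈ F := by rw [hF, Set.Finite.mem_toFinset]; exact base_mem_pos R hβ
  rw [hsum, copair_smul_left, copair_sum, ← Finset.add_sum_erase _ _ hβF,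
    copair_self R hβΦ]
  have hzero : ∑ γ ∈ F.erase β, copair γ β = 0 := by
    refine Finset.sum_involution (fun γ _ => reflV β γ) ?_ ?_ ?_ ?_
    · intro γ hγ
      rw [copair_reflV R hβΦ]; ring
    · intro γ hγ hne heq
      apply hne
      have heq' : reflV β γ = γ := heq
      have : copair (reflV β γ) β = - copair γ β := copair_reflV R hβΦ γ
      rw [heq'] at this
      linarith [this]
    · intro γ hγ
      have hγ' := Finset.mem_erase.mp hγ
      have hγP : γ ∈ R.posRoots := by
        have := hγ'.2; rwa [hF, Set.Finite.mem_toFinset] at this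
      have h := simple_reflect_pos R hβ hγP hγ'.1
      exact Finset.mem_erase.mpr ⟨h.2, (hPfin.mem_toFinset).mpr h.1⟩
    · intro γ hγ
      exact reflV_involutive β γ
  rw [hzero]
  norm_num

end SInvAux
namespace SInvAux
open RootSystemBase

variable {V : Type*} [NormedAddCommGroup V] [InnerProductSpace ℝ V]

lemma pos_to_neg_of_base (R : RootSystemBase V) {g : V ≃ₗ[ℝ] V}
    (hgΦ : ∀ α ∈ R.Φ, g α ∈ R.Φ)
    (hall : ∀ β ∈ R.Δ, g β ∈ R.negRoots) :
    ∀ α ∈ R.posRoots, g α ∈ R.negRoots := by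
  intro α hα
  obtain ⟨hαΦ, c, hc, hrep⟩ := hα
  have hex : ∀ β ∈ R.Δ, ∃ dd : V → ℝ, (∀ v, 0 ≤ dd v) ∧ -(g β) = ∑ δ ∈ R.Δ, dd δ • δ :=
    fun β hβ => (hall β hβ).2
  choose! d hnn heq using hex
  have hgΦ' : -(g α) ∈ R.Φ := R.neg_mem _ (hgΦ α hαΦ)
  refine ⟨hgΦ', fun δ => ∑ β ∈ R.Δ, c β * d β δ, ?_, ?_⟩
  · intro δ
    refine Finset.sum_nonneg fun β hβ => mul_nonneg (hc β) (hnn β hβ δ)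
  · have h1 : g α = ∑ β ∈ R.Δ, c β • g β := by
      rw [hrep, map_sum]
      exact Finset.sum_congr rfl fun β _ => by rw [map_smul]
    have h2 : -(g α) = ∑ β ∈ R.Δ, c β • (-(g β)) := by
      rw [h1, ← Finset.sum_neg_distrib]
      exact Finset.sum_congr rfl fun β _ => by rw [smul_neg]
    rw [h2]
    rw [Finset.sum_congr rfl fun β hβ => by rw [heq β hβ]]
    rw [Finset.sum_congr rfl fun β _ => Finset.smul_sum]
    rw [Finset.sum_comm]
    refine Finset.sum_congr rfl fun δ _ => ?_
    rw [Finset.sum_smul]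
    exact Finset.sum_congr rfl fun β _ => by rw [smul_smul]

lemma longest_pos_to_neg (R : RootSystemBase V) {w₀ : V ≃ₗ[ℝ] V}
    (hw₀ : R.IsLongest w₀) : ∀ α ∈ R.posRoots, w₀ α ∈ R.negRoots := by
  by_contra hcon
  push_neg at hcon
  have hexβ : ∃ β ∈ R.Δ, w₀ β ∈ R.posRoots := by
    by_contra hcon2
    push_neg at hcon2
    obtain ⟨α, hαP, hαnot⟩ := hcon
    refine hαnot (pos_to_neg_of_base R (weyl_maps R hw₀.1) (fun β hβ => ?_) α hαP)
    rcases mem_pos_or_neg R (weyl_maps R hw₀.1 β (R.base_subset hβ)) with h | h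
    · exact absurd h (hcon2 β hβ)
    · exact h
  obtain ⟨β, hβ, hβP⟩ := hexβ
  have hβΦ : β ∈ R.Φ := R.base_subset hβ
  set s := reflV β with hs
  have hsW : s ∈ R.weylGroup := reflV_mem R hβΦ
  have hmem : w₀ * s ∈ R.weylGroup := mul_mem hw₀.1 hsW
  -- the inversion set of w₀ * s
  have hset : R.posRoots ∩ ⇑(w₀ * s) ⁻¹' R.negRoots
      = insert β ((⇑s) '' (R.posRoots ∩ ⇑w₀ ⁻¹' R.negRoots)) := by
    ext x
    simp only [Set.mem_inter_iff, Set.mem_preimage, Set.mem_insert_iff, Set.mem_image,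
      mulApply]
    constructor
    · rintro ⟨hxP, hxN⟩
      by_cases hxβ : x = β
      · exact Or.inl hxβ
      · exact Or.inr ⟨s x, ⟨(simple_reflect_pos R hβ hxP hxβ).1, hxN⟩, reflV_involutive β x⟩
    · rintro (rfl | ⟨y, ⟨hyP, hyN⟩, rfl⟩)
      · refine ⟨base_mem_pos R hβ, ?_⟩
        rw [hs, reflV_self R hβΦ, map_neg]
        exact (neg_mem_negRoots_iff R _).mpr hβP
      · have hyβ : y ≠ β := by
          rintro rfl
          exact pos_neg_disjoint R hβP hyN
        refine ⟨(simple_reflect_pos R hβ hyP hyβ).1, ?_⟩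
        rwa [reflV_involutive β y]
  have hβnot : β ∉ (⇑s) '' (R.posRoots ∩ ⇑w₀ ⁻¹' R.negRoots) := by
    rintro ⟨y, ⟨hyP, _⟩, hy⟩
    have : y = s β := by rw [← hy, reflV_involutive]
    rw [hs, reflV_self R hβΦ] at this
    refine pos_neg_disjoint R hyP ?_
    rw [this]
    exact (neg_mem_negRoots_iff R _).mpr (base_mem_pos R hβ)
  have hfin : ((⇑s) '' (R.posRoots ∩ ⇑w₀ ⁻¹' R.negRoots)).Finite :=
    ((R.finite.subset (posRoots_subset R)).subset Set.inter_subset_left).image _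
  have hlen : R.length (w₀ * s) = R.length w₀ + 1 := by
    rw [length, hset, Set.ncard_insert_of_notMem hβnot hfin,
      Set.ncard_image_of_injective _ s.injective]
    rfl
  have := hw₀.2 (w₀ * s) hmem
  rw [hlen] at this
  omega

lemma longest_neg_to_pos (R : RootSystemBase V) {w₀ : V ≃ₗ[ℝ] V}
    (hw₀ : R.IsLongest w₀) : ∀ α ∈ R.negRoots, w₀ α ∈ R.posRoots := by
  intro α hα
  have h : -α ∈ R.posRoots := hα
  have := longest_pos_to_neg R hw₀ _ h
  rw [map_neg] at this
  rwa [neg_mem_negRoots_iff R] at this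

lemma longest_symm_pos_to_neg (R : RootSystemBase V) {w₀ : V ≃ₗ[ℝ] V}
    (hw₀ : R.IsLongest w₀) : ∀ α ∈ R.posRoots, w₀.symm α ∈ R.negRoots := by
  intro α hα
  have hiW : w₀⁻¹ ∈ R.weylGroup := inv_mem hw₀.1
  have hΦ : w₀.symm α ∈ R.Φ := weyl_maps R hiW α (posRoots_subset R hα)
  rcases mem_pos_or_neg R hΦ with h | h
  · exfalso
    have := longest_pos_to_neg R hw₀ _ h
    rw [w₀.apply_symm_apply] at this
    exact pos_neg_disjoint R hα this
  · exact h

lemma longest_symm_neg_to_pos (R : RootSystemBase V) {w₀ : V ≃ₗ[ℝ] V}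
    (hw₀ : R.IsLongest w₀) : ∀ α ∈ R.negRoots, w₀.symm α ∈ R.posRoots := by
  intro α hα
  have h : -α ∈ R.posRoots := hα
  have := longest_symm_pos_to_neg R hw₀ _ h
  rw [map_neg] at this
  rwa [neg_mem_negRoots_iff R] at this

lemma sub_mem (R : RootSystemBase V) {α β : V} (hα : α ∈ R.Φ) (hβ : β ∈ R.Φ)
    (hpos : 0 < ⟪α, β⟫) (hne : α ≠ β) : α - β ∈ R.Φ := by
  have hαα := inner_self_pos' R hα
  have hββ := inner_self_pos' R hβ
  have hnαβ : α ≠ -β := by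
    rintro rfl
    rw [inner_neg_left] at hpos
    linarith
  have hnt : ∀ t : ℝ, α ≠ t • β := by
    intro t ht
    rcases R.reduced β hβ t (ht ▸ hα) with rfl | rfl
    · rw [one_smul] at ht; exact hne ht
    · rw [neg_one_smul] at ht; exact hnαβ ht
  -- strict Cauchy-Schwarz
  have hCS : ⟪α, β⟫ ^ 2 < ⟪α, α⟫ * ⟪β, β⟫ := by
    set t : ℝ := ⟪α, β⟫ / ⟪β, β⟫ with ht
    have hne0 : α - t • β ≠ 0 := fun h => hnt t (by rw [← sub_eq_zero]; exact h)
    have hpos0 : 0 < ⟪α - t • β, α - t • β⟫ :=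
      lt_of_le_of_ne real_inner_self_nonneg
        (fun h => hne0 (inner_self_eq_zero.mp h.symm))
    have hexp : ⟪α - t • β, α - t • β⟫ = ⟪α, α⟫ - ⟪α, β⟫ ^ 2 / ⟪β, β⟫ := by
      simp only [inner_sub_left, inner_sub_right, real_inner_smul_left,
        real_inner_smul_right, ht]
      rw [real_inner_comm β α]
      field_simp
      ring
    rw [hexp] at hpos0
    have := (div_lt_iff₀ hββ).mp (by linarith : ⟪α, β⟫ ^ 2 / ⟪β, β⟫ < ⟪α, α⟫)
    linarith
  obtain ⟨n, hn⟩ := R.crystallographic α hα β hβ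
  obtain ⟨m, hm⟩ := R.crystallographic β hβ α hα
  have hn1 : 1 ≤ n := by
    have : (0:ℝ) < (n:ℝ) := by
      rw [hn]; positivity
    exact_mod_cast this
  have hsym : (inner ℝ β α : ℝ) = inner ℝ α β := real_inner_comm α β
  have hm1 : 1 ≤ m := by
    have : (0:ℝ) < (m:ℝ) := by
      rw [hm, hsym]; positivity
    exact_mod_cast this
  have hprod : ((n * m : ℤ) : ℝ) < 4 := by
    push_cast
    rw [hn, hm, hsym]
    rw [show 2 * ⟪α, β⟫ / ⟪α, α⟫ * (2 * ⟪α, β⟫ / ⟪β, β⟫)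
        = 4 * (⟪α, β⟫ ^ 2) / (⟪α, α⟫ * ⟪β, β⟫) by field_simp; ring]
    rw [div_lt_iff₀ (by positivity)]
    nlinarith
  have hcases : n = 1 ∨ m = 1 := by
    by_contra hcon
    push_neg at hcon
    have h2n : 2 ≤ n := by omega
    have h2m : 2 ≤ m := by omega
    have : (4:ℤ) ≤ n * m := by nlinarith
    exact_mod_cast absurd hprod (by push_cast; exact_mod_cast not_lt.mpr (by exact_mod_cast this))
  rcases hcases with h1 | h1
  · -- 2⟪α,β⟫/⟪α,α⟫ = 1, use reflection of β in α
    have : β - (2 * ⟪α, β⟫ / ⟪α, α⟫) • α ∈ R.Φ := R.reflect_mem α hα β hβ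
    rw [← hn, h1] at this
    push_cast at this
    rw [one_smul] at this
    have := R.neg_mem _ this
    rwa [neg_sub] at this
  · have : α - (2 * ⟪β, α⟫ / ⟪β, β⟫) • β ∈ R.Φ := R.reflect_mem β hβ α hα
    rw [← hm, h1] at this
    push_cast at this
    rwa [one_smul] at this

end SInvAux
namespace SInvAux
open RootSystemBase

variable {V : Type*} [NormedAddCommGroup V] [InnerProductSpace ℝ V]

lemma base_not_sum (R : RootSystemBase V) {α x y : V} (hα : α ∈ R.Δ)
    (hx : x ∈ R.posRoots) (hy : y ∈ R.posRoots) : α ≠ x + y := by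
  classical
  rintro heq
  obtain ⟨hxΦ, c, hc, hcrep⟩ := hx
  obtain ⟨hyΦ, d, hd, hdrep⟩ := hy
  have hαrep : ∑ β ∈ R.Δ, (fun v => if v = α then (1:ℝ) else 0) β • β
      = ∑ β ∈ R.Δ, (fun v => c v + d v) β • β := by
    have h1 : ∑ β ∈ R.Δ, (fun v => if v = α then (1:ℝ) else 0) β • β = α := by
      rw [show ∀ s : Finset V, ∑ v ∈ s, (if v = α then (1:ℝ) else 0) • v
          = ∑ v ∈ s, (if v = α then v else 0) from fun s => Finset.sum_congr rfl
            (fun v _ => by split <;> simp)]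
      rw [Finset.sum_ite_eq' R.Δ α (fun v => v)]
      simp [hα]
    have h2 : ∑ β ∈ R.Δ, (fun v => c v + d v) β • β = x + y := by
      simp only [add_smul, Finset.sum_add_distrib]
      rw [← hcrep, ← hdrep]
    rw [h1, h2, heq]
  have huniq := coeff_unique R hαrep
  have hcoef : ∀ β ∈ R.Δ, β ≠ α → c β = 0 ∧ d β = 0 := by
    intro β hβ hne
    have := huniq β hβ
    simp only [if_neg hne] at this
    constructor <;> [linarith [hc β, hd β]; linarith [hc β, hd β]]
  have hxα : x = c α • α := by
    rw [hcrep]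
    exact Finset.sum_eq_single α (fun β h1 h2 => by rw [(hcoef β h1 h2).1, zero_smul])
      (fun h => absurd hα h)
  have hyα : y = d α • α := by
    rw [hdrep]
    exact Finset.sum_eq_single α (fun β h1 h2 => by rw [(hcoef β h1 h2).2, zero_smul])
      (fun h => absurd hα h)
  have hsum1 : c α + d α = 1 := by
    have := huniq α hα
    rw [if_pos rfl] at this
    linarith
  have hαΦ : α ∈ R.Φ := R.base_subset hα
  have hc1 : c α = 1 := by
    rcases R.reduced α hαΦ (c α) (hxα ▸ hxΦ) with h | h
    · exact h
    · have := hc α; rw [h] at this; linarith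
  have hd1 : d α = 1 := by
    rcases R.reduced α hαΦ (d α) (hyα ▸ hyΦ) with h | h
    · exact h
    · have := hd α; rw [h] at this; linarith
  rw [hc1, hd1] at hsum1
  norm_num at hsum1

lemma indecomposable_mem_base (R : RootSystemBase V) {δ : V} (hδ : δ ∈ R.posRoots)
    (hind : ∀ x y : V, x ∈ R.posRoots → y ∈ R.posRoots → δ ≠ x + y) : δ ∈ R.Δ := by
  by_contra hδΔ
  obtain ⟨hδΦ, c, hc, hrep⟩ := hδ
  have hself : (0:ℝ) < ∑ β ∈ R.Δ, c β * ⟪δ, β⟫ := by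
    have : ⟪δ, δ⟫ = ∑ β ∈ R.Δ, c β * ⟪δ, β⟫ := by
      conv_lhs => rw [show ⟪δ, δ⟫ = ⟪δ, ∑ β ∈ R.Δ, c β • β⟫ by rw [← hrep]]
      rw [inner_sum]
      exact Finset.sum_congr rfl fun β _ => by rw [real_inner_smul_right]
    rw [← this]
    exact inner_self_pos' R hδΦ
  have hexβ : ∃ β ∈ R.Δ, 0 < ⟪δ, β⟫ := by
    by_contra hcon
    push_neg at hcon
    have : ∑ β ∈ R.Δ, c β * ⟪δ, β⟫ ≤ 0 :=
      Finset.sum_nonpos fun β hβ => mul_nonpos_of_nonneg_of_nonpos (hc β) (hcon β hβ)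
    linarith
  obtain ⟨β, hβ, hβpos⟩ := hexβ
  have hβΦ : β ∈ R.Φ := R.base_subset hβ
  have hδβ : δ ≠ β := fun h => hδΔ (h ▸ hβ)
  have hγΦ : δ - β ∈ R.Φ := sub_mem R hδΦ hβΦ hβpos hδβ
  rcases mem_pos_or_neg R hγΦ with h | h
  · exact hind (δ - β) β h (base_mem_pos R hβ) (by abel)
  · have hnγ : -(δ - β) ∈ R.posRoots := h
    refine base_not_sum R hβ hnγ ⟨hδΦ, c, hc, hrep⟩ ?_
    abel

lemma longest_neg_base_image (R : RootSystemBase V) {w₀ : V ≃ₗ[ℝ] V}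
    (hw₀ : R.IsLongest w₀) : (fun x => -(w₀ x)) '' ↑R.Δ = ↑R.Δ := by
  have hmaps : ∀ α ∈ R.Δ, -(w₀ α) ∈ R.Δ := by
    intro α hα
    have hαP : α ∈ R.posRoots := base_mem_pos R hα
    have hP : -(w₀ α) ∈ R.posRoots := longest_pos_to_neg R hw₀ α hαP
    refine indecomposable_mem_base R hP ?_
    intro x y hx hy heq
    have hxN : w₀.symm x ∈ R.negRoots := longest_symm_pos_to_neg R hw₀ x hx
    have hyN : w₀.symm y ∈ R.negRoots := longest_symm_pos_to_neg R hw₀ y hy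
    have hα2 : α = -(w₀.symm x) + -(w₀.symm y) := by
      have := congrArg (fun v => w₀.symm v) heq
      simp only [map_neg, map_add, w₀.symm_apply_apply] at this
      rw [show α = -(-α) from (neg_neg α).symm, this]
      abel
    exact base_not_sum R hα (hxN : -(w₀.symm x) ∈ R.posRoots)
      (hyN : -(w₀.symm y) ∈ R.posRoots) hα2
  have hinj : Function.Injective (fun x : V => -(w₀ x)) := fun a b h => by
    simp only [neg_inj] at h
    exact w₀.injective h
  have hfin : (↑R.Δ : Set V).Finite := R.Δ.finite_toSet
  have hbij := (hfin.injOn_iff_bijOn_of_mapsTo (fun x hx => hmaps x hx)).mp hinj.injOn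
  exact hbij.image_eq

lemma longest_base_iff (R : RootSystemBase V) {w₀ : V ≃ₗ[ℝ] V}
    (hw₀ : R.IsLongest w₀) (x : V) : w₀ x ∈ (↑R.Δ : Set V) ↔ -x ∈ (↑R.Δ : Set V) := by
  have him := longest_neg_base_image R hw₀
  constructor
  · intro h
    have : (fun v => -(w₀ v)) (-x) ∈ (fun v => -(w₀ v)) '' ↑R.Δ := by
      rw [him]
      simpa using h
    obtain ⟨u, hu, hue⟩ := this
    have : u = -x := by
      have := hue
      simp only [map_neg, neg_neg] at this
      exact w₀.injective (by
        have := congrArg Neg.neg hue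
        simpa using this)
    rwa [← this]
  · intro h
    have : (fun v => -(w₀ v)) (-x) ∈ (↑R.Δ : Set V) := by
      rw [← him]
      exact ⟨-x, h, rfl⟩
    simpa using this

lemma longest_neg_iff (R : RootSystemBase V) {w₀ : V ≃ₗ[ℝ] V}
    (hw₀ : R.IsLongest w₀) (x : V) : w₀ x ∈ R.negRoots ↔ -x ∈ R.negRoots := by
  constructor
  · intro h
    have : x ∈ R.posRoots := by
      have := longest_symm_neg_to_pos R hw₀ _ h
      rwa [w₀.symm_apply_apply] at this
    exact (neg_mem_negRoots_iff R x).mpr this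
  · intro h
    have hx : x ∈ R.posRoots := (neg_mem_negRoots_iff R x).mp h
    exact longest_pos_to_neg R hw₀ x hx

end SInvAux
namespace SInvAux
open RootSystemBase

attribute [local instance] Classical.propDecidable

variable {V : Type*} [NormedAddCommGroup V] [InnerProductSpace ℝ V]

/-- If a root lies in the span of `Δ \ {αp}` then its coordinate at `αp`
vanishes and it is a combination of `Δ \ {αp}`. -/
lemma pos_para_rep (R : RootSystemBase V) {αp : V} (hαp : αp ∈ R.Δ) {γ : V}
    (hγs : γ ∈ (Submodule.span ℝ (↑R.Δ \ {αp} : Set V) : Set V)) {c : V → ℝ}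
    (hrep : γ = ∑ β ∈ R.Δ, c β • β) :
    c αp = 0 ∧ γ = ∑ β ∈ R.Δ.erase αp, c β • β := by
  rw [← Finset.coe_erase] at hγs
  obtain ⟨f, -, hf⟩ := Submodule.mem_span_finset.mp hγs
  set f' : V → ℝ := fun v => if v = αp then 0 else f v with hf'
  have hrep2 : γ = ∑ β ∈ R.Δ, f' β • β := by
    rw [← Finset.add_sum_erase _ (fun v => f' v • v) hαp]
    have h1 : ∑ v ∈ R.Δ.erase αp, f' v • v = ∑ v ∈ R.Δ.erase αp, f v • v :=
      Finset.sum_congr rfl fun v hv => by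
        have hne : v ≠ αp := (Finset.mem_erase.mp hv).1
        simp [hf', hne]
    rw [h1, hf]
    simp [hf']
  have huniq := coeff_unique R (hrep.symm.trans hrep2)
  have hc0 : c αp = 0 := by
    have := huniq αp hαp
    simpa [hf'] using this
  refine ⟨hc0, ?_⟩
  rw [hrep, ← Finset.add_sum_erase _ (fun v => c v • v) hαp, hc0]
  simp

/-- The parabolic subsystem as a root system with base `Δ \ {αp}`. -/
noncomputable def paraSystem (R : RootSystemBase V) (αp : V) (hαp : αp ∈ R.Δ) :
    RootSystemBase V where
  Φ := R.paraRoots αp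
  finite := R.finite.subset Set.inter_subset_left
  zero_not_mem := fun h => R.zero_not_mem h.1
  neg_mem := fun α hα => ⟨R.neg_mem α hα.1, Submodule.neg_mem _ hα.2⟩
  reduced := fun α hα t ht => R.reduced α hα.1 t ht.1
  crystallographic := fun α hα β hβ => R.crystallographic α hα.1 β hβ.1
  reflect_mem := fun α hα β hβ =>
    ⟨R.reflect_mem α hα.1 β hβ.1,
      Submodule.sub_mem _ hβ.2 (Submodule.smul_mem _ _ hα.2)⟩
  Δ := R.Δ.erase αp
  base_subset := fun β hβ => by
    have hβ' : β ∈ R.Δ.erase αp := hβ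
    have h1 := Finset.mem_erase.mp hβ'
    exact ⟨R.base_subset h1.2, Submodule.subset_span (by
      rw [← Finset.coe_erase]; exact hβ)⟩
  base_indep := by
    have := R.base_indep
    exact this.comp (fun x : (R.Δ.erase αp : Finset V) =>
      (⟨x.1, Finset.mem_of_mem_erase x.2⟩ : R.Δ))
      (fun a b hab => by
        have h2 : (a : V) = (b : V) :=
          congrArg (fun y : {x // x ∈ R.Δ} => (y : V)) hab
        exact Subtype.ext h2)
  base_pos_neg := by
    intro α hα
    rcases R.base_pos_neg α hα.1 with ⟨c, hc, hrep⟩ | ⟨c, hc, hrep⟩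
    · exact Or.inl ⟨c, hc, (pos_para_rep R hαp hα.2 hrep).2⟩
    · have hspan : -α ∈ (Submodule.span ℝ (↑R.Δ \ {αp} : Set V) : Set V) :=
        Submodule.neg_mem _ hα.2
      have hrep' : -α = ∑ β ∈ R.Δ, c β • β := by rw [hrep]; simp
      have h2 := (pos_para_rep R hαp hspan hrep').2
      exact Or.inr ⟨c, hc, by rw [← h2]; simp⟩

lemma paraSystem_Δ (R : RootSystemBase V) {αp : V} (hαp : αp ∈ R.Δ) :
    (paraSystem R αp hαp).Δ = R.Δ.erase αp := rfl

lemma paraSystem_Φ (R : RootSystemBase V) {αp : V} (hαp : αp ∈ R.Δ) :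
    (paraSystem R αp hαp).Φ = R.paraRoots αp := rfl

lemma paraSystem_posRoots (R : RootSystemBase V) {αp : V} (hαp : αp ∈ R.Δ) :
    (paraSystem R αp hαp).posRoots = R.posRoots ∩ R.paraRoots αp := by
  ext γ
  simp only [posRoots, Set.mem_setOf_eq, Set.mem_inter_iff,
    paraSystem_Δ R hαp, paraSystem_Φ R hαp]
  constructor
  · rintro ⟨hγΦ, c, hc, hrep⟩
    refine ⟨⟨hγΦ.1, fun v => if v = αp then 0 else c v, fun v => ?_, ?_⟩, hγΦ⟩
    · dsimp only; split
      · exact le_refl 0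
      · exact hc v
    · rw [← Finset.add_sum_erase _ (fun v => (if v = αp then (0:ℝ) else c v) • v) hαp]
      rw [show (if αp = αp then (0:ℝ) else c αp) = 0 from by simp, zero_smul, zero_add,
        hrep]
      exact Finset.sum_congr rfl fun v hv => by
        have hne : v ≠ αp := (Finset.mem_erase.mp hv).1
        simp [hne]
  · rintro ⟨⟨hγΦ, c, hc, hrep⟩, hpara⟩
    exact ⟨hpara, c, hc, (pos_para_rep R hαp hpara.2 hrep).2⟩

lemma paraSystem_negRoots (R : RootSystemBase V) {αp : V} (hαp : αp ∈ R.Δ) :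
    (paraSystem R αp hαp).negRoots = R.negRoots ∩ R.paraRoots αp := by
  ext γ
  have h1 : -γ ∈ (paraSystem R αp hαp).posRoots ↔
      -γ ∈ R.posRoots ∩ R.paraRoots αp := by rw [paraSystem_posRoots R hαp]
  constructor
  · intro h
    have h2 := h1.mp h
    refine ⟨h2.1, ⟨?_, ?_⟩⟩
    · have := R.neg_mem _ h2.2.1; simpa using this
    · have := Submodule.neg_mem (Submodule.span ℝ (↑R.Δ \ {αp} : Set V)) h2.2.2
      simpa using this
  · rintro ⟨hN, hpara⟩
    exact h1.mpr ⟨hN, ⟨R.neg_mem _ hpara.1, Submodule.neg_mem _ hpara.2⟩⟩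

lemma paraSystem_weylGroup (R : RootSystemBase V) {αp : V} (hαp : αp ∈ R.Δ) :
    (paraSystem R αp hαp).weylGroup = R.paraWeylGroup αp := rfl

lemma paraSystem_isLongest (R : RootSystemBase V) {αp : V} (hαp : αp ∈ R.Δ)
    {wp : V ≃ₗ[ℝ] V} (hwp : R.IsParaLongest αp wp) :
    (paraSystem R αp hαp).IsLongest wp := by
  have hlen : ∀ w : V ≃ₗ[ℝ] V, (paraSystem R αp hαp).length w = R.paraLength αp w := by
    intro w
    unfold length paraLength
    rw [paraSystem_posRoots R hαp, paraSystem_negRoots R hαp]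
  refine ⟨by rw [paraSystem_weylGroup R hαp]; exact hwp.1, fun w hw => ?_⟩
  rw [hlen, hlen]
  exact hwp.2 w (by rw [← paraSystem_weylGroup R hαp]; exact hw)

lemma paraWeyl_le_weyl (R : RootSystemBase V) (αp : V) :
    R.paraWeylGroup αp ≤ R.weylGroup := by
  rw [paraWeylGroup]
  refine (Subgroup.closure_le _).mpr ?_
  rintro w ⟨α, hα, hw⟩
  exact Subgroup.subset_closure ⟨α, hα.1, hw⟩

lemma paraWeyl_span (R : RootSystemBase V) {αp : V} {g : V ≃ₗ[ℝ] V}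
    (hg : g ∈ R.paraWeylGroup αp) :
    ∀ x : V, g x - x ∈ Submodule.span ℝ (↑R.Δ \ {αp} : Set V) := by
  induction hg using Subgroup.closure_induction with
  | mem g hg =>
    obtain ⟨α, hα, hgα⟩ := hg
    intro x
    rw [hgα x]
    rw [show x - (2 * ⟪α, x⟫ / ⟪α, α⟫) • α - x = -((2 * ⟪α, x⟫ / ⟪α, α⟫) • α) by abel]
    exact Submodule.neg_mem _ (Submodule.smul_mem _ _ hα.2)
  | one => intro x; simp
  | mul a b _ _ pa pb =>
    intro x
    rw [mulApply]
    rw [show a (b x) - x = (a (b x) - b x) + (b x - x) by abel]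
    exact Submodule.add_mem _ (pa (b x)) (pb x)
  | inv a _ pa =>
    intro x
    have h := pa (a⁻¹ x)
    rw [invApply, a.apply_symm_apply] at h
    rw [invApply]
    rw [show a.symm x - x = -(x - a.symm x) by abel]
    exact Submodule.neg_mem _ h

lemma paraWeyl_maps_nonpara (R : RootSystemBase V) {αp : V} (hαp : αp ∈ R.Δ)
    {g : V ≃ₗ[ℝ] V} (hg : g ∈ R.paraWeylGroup αp) :
    ∀ γ, γ ∈ R.posRoots → γ ∉ R.paraRoots αp →
      g γ ∈ R.posRoots ∧ g γ ∉ R.paraRoots αp := by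
  intro γ hγP hγpara
  obtain ⟨hγΦ, c, hc, hrep⟩ := hγP
  have hgW : g ∈ R.weylGroup := paraWeyl_le_weyl R αp hg
  have hgγΦ : g γ ∈ R.Φ := weyl_maps R hgW γ hγΦ
  have hcαp : 0 < c αp := by
    rcases lt_or_eq_of_le (hc αp) with h | h
    · exact h
    · exfalso
      refine hγpara ⟨hγΦ, ?_⟩
      have h2 : γ = ∑ v ∈ R.Δ.erase αp, c v • v := by
        rw [hrep, ← Finset.add_sum_erase _ (fun v => c v • v) hαp, ← h]
        simp
      rw [h2]
      refine Submodule.sum_mem _ fun v hv => Submodule.smul_mem _ _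
        (Submodule.subset_span ?_)
      have hv' := Finset.mem_erase.mp hv
      exact ⟨hv'.2, hv'.1⟩
  have hspan : g γ - γ ∈ Submodule.span ℝ (↑(R.Δ.erase αp) : Set V) := by
    rw [Finset.coe_erase]
    exact paraWeyl_span R hg γ
  obtain ⟨f, -, hf⟩ := Submodule.mem_span_finset.mp hspan
  set e : V → ℝ := fun v => c v + (if v = αp then 0 else f v) with he
  have hgrep : g γ = ∑ v ∈ R.Δ, e v • v := by
    have h3 : ∑ v ∈ R.Δ, e v • v
        = (∑ v ∈ R.Δ, c v • v) + ∑ v ∈ R.Δ.erase αp, f v • v := by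
      rw [← Finset.add_sum_erase _ (fun v => e v • v) hαp,
          ← Finset.add_sum_erase _ (fun v => c v • v) hαp]
      have h4 : e αp = c αp := by simp [he]
      have h5 : ∑ v ∈ R.Δ.erase αp, e v • v
          = ∑ v ∈ R.Δ.erase αp, (c v • v + f v • v) :=
        Finset.sum_congr rfl fun v hv => by
          have hne : v ≠ αp := (Finset.mem_erase.mp hv).1
          simp [he, hne, add_smul]
      rw [h4, h5, Finset.sum_add_distrib]
      abel
    rw [h3, ← hrep, hf]
    abel
  constructor
  · rcases mem_pos_or_neg R hgγΦ with h | h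
    · exact h
    · exfalso
      obtain ⟨d, hd, hdrep⟩ := h.2
      have hrep3 : g γ = ∑ v ∈ R.Δ, (fun v => -(d v)) v • v := by
        rw [show g γ = -(-(g γ)) from (neg_neg _).symm, hdrep, ← Finset.sum_neg_distrib]
        exact Finset.sum_congr rfl fun v _ => by exact (neg_smul _ _).symm
      have huq := coeff_unique R (hgrep.symm.trans hrep3) αp hαp
      have h4 : e αp = c αp := by simp [he]
      have h6 := hd αp
      rw [h4] at huq
      have huq' : c αp = -(d αp) := huq
      linarith
  · intro hpara2
    refine hγpara ⟨hγΦ, ?_⟩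
    have h5 : γ = g γ - (g γ - γ) := by abel
    rw [h5]
    exact Submodule.sub_mem _ hpara2.2 (paraWeyl_span R hg γ)

end SInvAux
namespace SInvAux
open RootSystemBase

attribute [local instance] Classical.propDecidable

variable {V : Type*} [NormedAddCommGroup V] [InnerProductSpace ℝ V]

lemma para_base_neg_image (R : RootSystemBase V) {αp : V} (hαp : αp ∈ R.Δ)
    {wp : V ≃ₗ[ℝ] V} (hwp : R.IsParaLongest αp wp) :
    (fun x => -(wp x)) '' (↑R.Δ \ {αp} : Set V) = (↑R.Δ \ {αp} : Set V) := by
  have h := longest_neg_base_image (paraSystem R αp hαp) (paraSystem_isLongest R hαp hwp)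
  rw [paraSystem_Δ R hαp, Finset.coe_erase] at h
  exact h

lemma para_base_iff (R : RootSystemBase V) {αp : V} (hαp : αp ∈ R.Δ)
    {wp : V ≃ₗ[ℝ] V} (hwp : R.IsParaLongest αp wp) (x : V) :
    x ∈ (↑R.Δ \ {αp} : Set V) ↔ -(wp.symm x) ∈ (↑R.Δ \ {αp} : Set V) := by
  have him := para_base_neg_image R hαp hwp
  constructor
  · intro hx
    rw [← him] at hx
    obtain ⟨u, hu, hux⟩ := hx
    have : -(wp.symm x) = u := by
      simp only at hux
      rw [← hux]
      simp
    rwa [this]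
  · intro hy
    have : (fun v => -(wp v)) (-(wp.symm x)) ∈ (↑R.Δ \ {αp} : Set V) := by
      rw [← him]
      exact ⟨_, hy, rfl⟩
    simpa using this

lemma lam_span_orth (R : RootSystemBase V) {αp : V} {lam : V}
    (hlam : ∀ β ∈ R.Δ, copair lam β = if β = αp then 1 else 0) :
    ∀ v ∈ Submodule.span ℝ (↑R.Δ \ {αp} : Set V), ⟪lam, v⟫ = 0 := by
  intro v hv
  induction hv using Submodule.span_induction with
  | mem v hv =>
    obtain ⟨hvΔ, hvne⟩ := hv
    have hvΦ : v ∈ R.Φ := R.base_subset hvΔ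
    have := hlam v hvΔ
    rw [if_neg (by simpa using hvne)] at this
    exact (copair_eq_zero_iff R hvΦ lam).mp this
  | zero => simp
  | add x y _ _ px py => rw [inner_add_right, px, py]; ring
  | smul a x _ px => rw [real_inner_smul_right, px]; ring

lemma wp_rho (R : RootSystemBase V) {αp : V} (hαp : αp ∈ R.Δ)
    {wp : V ≃ₗ[ℝ] V} (hwp : R.IsParaLongest αp wp) {ρ ρp : V}
    (hρ : ρ = (2⁻¹ : ℝ) • ∑ᶠ α ∈ R.posRoots, α)
    (hρp : ρp = (2⁻¹ : ℝ) • ∑ᶠ α ∈ R.posRoots ∩ R.paraRoots αp, α) :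
    wp ρ = ρ - (2:ℝ) • ρp := by
  have hwpL := paraSystem_isLongest R hαp hwp
  have hPfin : R.posRoots.Finite := R.finite.subset (posRoots_subset R)
  have hPpfin : (R.posRoots ∩ R.paraRoots αp).Finite :=
    hPfin.subset Set.inter_subset_left
  set PF := hPfin.toFinset with hPF
  set PpF := hPpfin.toFinset with hPpF
  have hP : ∑ᶠ α ∈ R.posRoots, α = ∑ γ ∈ PF, γ := by
    rw [← finsum_mem_coe_finset]; congr 1; rw [hPF, Set.Finite.coe_toFinset]
  have hPp : ∑ᶠ α ∈ R.posRoots ∩ R.paraRoots αp, α = ∑ γ ∈ PpF, γ := by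
    rw [← finsum_mem_coe_finset]; congr 1; rw [hPpF, Set.Finite.coe_toFinset]
  have hsub : PpF ⊆ PF := fun x hx => by
    rw [hPF, Set.Finite.mem_toFinset]
    exact ((hPpfin.mem_toFinset).mp hx).1
  have hmemPp : ∀ γ, γ ∈ PpF ↔ γ ∈ (paraSystem R αp hαp).posRoots := by
    intro γ
    rw [hPpF, Set.Finite.mem_toFinset, paraSystem_posRoots R hαp]
  have hA : ∑ γ ∈ PpF, wp γ = -∑ γ ∈ PpF, γ := by
    rw [← Finset.sum_neg_distrib]
    refine Finset.sum_nbij' (fun γ => -(wp γ)) (fun δ => wp.symm (-δ)) ?_ ?_ ?_ ?_ ?_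
    · intro γ hγ
      rw [hmemPp] at hγ ⊢
      exact longest_pos_to_neg (paraSystem R αp hαp) hwpL γ hγ
    · intro δ hδ
      rw [hmemPp] at hδ ⊢
      have : -δ ∈ (paraSystem R αp hαp).negRoots :=
        (neg_mem_negRoots_iff (paraSystem R αp hαp) δ).mpr hδ
      exact longest_symm_neg_to_pos (paraSystem R αp hαp) hwpL _ this
    · intro γ _; simp
    · intro δ _; simp
    · intro γ _; exact (neg_neg _).symm
  have hBmaps : ∀ (g : V ≃ₗ[ℝ] V), g ∈ R.paraWeylGroup αp →
      ∀ γ ∈ PF \ PpF, g γ ∈ PF \ PpF := by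
    intro g hg γ hγ
    rw [Finset.mem_sdiff] at hγ ⊢
    have hγP : γ ∈ R.posRoots := (hPfin.mem_toFinset).mp hγ.1
    have hγnp : γ ∉ R.paraRoots αp := fun hmem =>
      hγ.2 ((hPpfin.mem_toFinset).mpr ⟨hγP, hmem⟩)
    obtain ⟨h1, h2⟩ := paraWeyl_maps_nonpara R hαp hg γ hγP hγnp
    exact ⟨(hPfin.mem_toFinset).mpr h1, fun hmem =>
      h2 ((hPpfin.mem_toFinset).mp hmem).2⟩
  have hB : ∑ γ ∈ PF \ PpF, wp γ = ∑ γ ∈ PF \ PpF, γ := by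
    refine Finset.sum_nbij' (fun γ => wp γ) (fun δ => wp.symm δ) ?_ ?_ ?_ ?_ ?_
    · exact hBmaps wp hwp.1
    · intro δ hδ
      have := hBmaps wp⁻¹ (inv_mem hwp.1) δ hδ
      rwa [invApply] at this
    · intro γ _; simp
    · intro δ _; simp
    · intro γ _; rfl
  have hsplit : ∑ γ ∈ PF, (γ : V) = ∑ γ ∈ PF \ PpF, γ + ∑ γ ∈ PpF, γ :=
    (Finset.sum_sdiff hsub).symm
  have hsplit2 : ∑ γ ∈ PF, wp γ = ∑ γ ∈ PF \ PpF, wp γ + ∑ γ ∈ PpF, wp γ :=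
    (Finset.sum_sdiff hsub).symm
  rw [hρ, hρp, hP, hPp, map_smul, map_sum, hsplit2, hA, hB, hsplit]
  module

end SInvAux
namespace SInvAux
open RootSystemBase

attribute [local instance] Classical.propDecidable

variable {V : Type*} [NormedAddCommGroup V] [InnerProductSpace ℝ V]

lemma mu_orth (R : RootSystemBase V) {αp : V} (hαp : αp ∈ R.Δ) {lam ρ ρp : V}
    (hlam : ∀ β ∈ R.Δ, copair lam β = if β = αp then 1 else 0)
    (hρ : ρ = (2⁻¹ : ℝ) • ∑ᶠ α ∈ R.posRoots, α)
    (hρp : ρp = (2⁻¹ : ℝ) • ∑ᶠ α ∈ R.posRoots ∩ R.paraRoots αp, α)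
    {cp : ℝ} (hcp : cp = 2 * copair (lam - ρp) αp) :
    ∀ x ∈ R.Φ, ⟪(2:ℝ) • ρ - (2:ℝ) • ρp - cp • lam, x⟫ = 0 := by
  classical
  have hρ1 : ∀ β ∈ R.Δ, copair ρ β = 1 := by
    intro β hβ
    rw [hρ]
    exact copair_rho R hβ
  have hρp' : ρp = (2⁻¹ : ℝ) • ∑ᶠ α ∈ (paraSystem R αp hαp).posRoots, α := by
    rw [hρp, paraSystem_posRoots R hαp]
  have hρp1 : ∀ β ∈ R.Δ.erase αp, copair ρp β = 1 := by
    intro β hβ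
    rw [hρp']
    exact copair_rho (paraSystem R αp hαp) (by exact hβ)
  have hμΔ : ∀ β ∈ R.Δ, ⟪(2:ℝ) • ρ - (2:ℝ) • ρp - cp • lam, β⟫ = 0 := by
    intro β hβ
    have hβΦ : β ∈ R.Φ := R.base_subset hβ
    rw [← copair_eq_zero_iff R hβΦ]
    rw [copair_sub_left, copair_sub_left, copair_smul_left, copair_smul_left,
      copair_smul_left]
    by_cases hcase : β = αp
    · subst hcase
      rw [hcp, copair_sub_left]
      have h1 := hlam β hβ
      rw [if_pos rfl] at h1
      rw [h1, hρ1 β hβ]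
      ring
    · have h1 := hlam β hβ
      rw [if_neg hcase] at h1
      rw [h1, hρ1 β hβ, hρp1 β (Finset.mem_erase.mpr ⟨hcase, hβ⟩)]
      ring
  intro x hx
  have hsum : ∀ c : V → ℝ, ⟪(2:ℝ) • ρ - (2:ℝ) • ρp - cp • lam, ∑ β ∈ R.Δ, c β • β⟫ = 0 := by
    intro c
    rw [inner_sum]
    refine Finset.sum_eq_zero fun β hβ => ?_
    rw [real_inner_smul_right, hμΔ β hβ]
    ring
  rcases R.base_pos_neg x hx with ⟨c, _, hrep⟩ | ⟨c, _, hrep⟩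
  · rw [hrep]; exact hsum c
  · rw [hrep, inner_neg_right, hsum c]
    ring

end SInvAux

open RootSystemBase SInvAux Classical in
theorem S_involution' {V : Type*} [NormedAddCommGroup V]
    [InnerProductSpace ℝ V] (R : RootSystemBase V) (αp : V) (hαp : αp ∈ R.Δ)
    (lam ρ ρp : V)
    (hlam : ∀ β ∈ R.Δ, copair lam β = if β = αp then 1 else 0)
    (hρ : ρ = (2⁻¹ : ℝ) • ∑ᶠ α ∈ R.posRoots, α)
    (hρp : ρp = (2⁻¹ : ℝ) • ∑ᶠ α ∈ R.posRoots ∩ R.paraRoots αp, α)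
    (w₀ wp : V ≃ₗ[ℝ] V) (hw₀ : R.IsLongest w₀) (hwp : R.IsParaLongest αp wp)
    (cp : ℝ) (hcp : cp = 2 * copair (lam - ρp) αp)
    (w : V ≃ₗ[ℝ] V) (hw : w ∈ R.weylGroup)
    (A : Set V) (hA : A = ↑R.Δ ∨ A = R.negRoots) :
    (fun f : ℝ → ℝ => fun s => f (-cp - s)) ''
        ((fun α => fun s : ℝ => copair lam α * s + copair ρ α) ''
          ((⇑w ⁻¹' A) \ (↑R.Δ \ {αp})))
      = (fun α => fun s : ℝ => copair lam α * s + copair ρ α) ''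
          ((⇑(w₀ * w * wp) ⁻¹' A) \ (↑R.Δ \ {αp})) := by
  classical
  have hAΦ : A ⊆ R.Φ := by
    rcases hA with rfl | rfl
    · exact R.base_subset
    · exact negRoots_subset R
  have hwpW : wp ∈ R.weylGroup := paraWeyl_le_weyl R αp hwp.1
  have hbig : ∀ z : V, w₀ z ∈ A ↔ -z ∈ A := by
    rcases hA with rfl | rfl
    · exact longest_base_iff R hw₀
    · exact longest_neg_iff R hw₀
  have hmu := mu_orth R hαp hlam hρ hρp hcp
  have hwprho := wp_rho R hαp hwp hρ hρp
  -- membership correspondence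
  have hmem : ∀ x : V, (x ∈ (⇑w ⁻¹' A) \ (↑R.Δ \ {αp})) ↔
      ((-(wp.symm x)) ∈ (⇑(w₀ * w * wp) ⁻¹' A) \ (↑R.Δ \ {αp})) := by
    intro x
    have h1 : (w₀ * w * wp) (-(wp.symm x)) = w₀ (-(w x)) := by
      show w₀ (w (wp (-(wp.symm x)))) = w₀ (-(w x))
      rw [map_neg, wp.apply_symm_apply, map_neg]
    constructor
    · rintro ⟨hx1, hx2⟩
      refine ⟨?_, fun hc => hx2 ((para_base_iff R hαp hwp x).mpr hc)⟩
      show (w₀ * w * wp) (-(wp.symm x)) ∈ A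
      rw [h1]
      exact (hbig (-(w x))).mpr (by simpa using hx1)
    · rintro ⟨hy1, hy2⟩
      refine ⟨?_, fun hc => hy2 ((para_base_iff R hαp hwp x).mp hc)⟩
      have h2 := (hbig (-(w x))).mp (by rw [← h1]; exact hy1)
      simpa using h2
  -- the function identity
  have hfun : ∀ x, x ∈ (⇑w ⁻¹' A) \ (↑R.Δ \ {αp}) → ∀ s : ℝ,
      copair lam (-(wp.symm x)) * s + copair ρ (-(wp.symm x))
        = copair lam x * (-cp - s) + copair ρ x := by
    intro x hx s
    have hxΦ : x ∈ R.Φ := by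
      have h := weyl_maps R (inv_mem hw) (w x) (hAΦ hx.1)
      rwa [invApply, w.symm_apply_apply] at h
    have hxx : ⟪x, x⟫ ≠ 0 := (inner_self_pos' R hxΦ).ne'
    -- lam is fixed by wp.symm
    have hlamfix : copair lam (wp.symm x) = copair lam x := by
      have hspan := paraWeyl_span R (inv_mem hwp.1) x
      rw [invApply] at hspan
      have hnum : ⟪lam, wp.symm x⟫ = ⟪lam, x⟫ := by
        have h0 := lam_span_orth R hlam _ hspan
        rw [inner_sub_right] at h0
        linarith
      have hden : ⟪wp.symm x, wp.symm x⟫ = ⟪x, x⟫ := by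
        have h0 := weyl_inner R (inv_mem hwpW) x x
        rwa [invApply] at h0
      unfold copair
      rw [hnum, hden]
    have hrho : copair ρ (wp.symm x) = copair (wp ρ) x := by
      have h0 := copair_weyl R hwpW ρ (wp.symm x)
      rw [wp.apply_symm_apply] at h0
      exact h0.symm
    have h0 : 2 * copair ρ x - 2 * copair ρp x - cp * copair lam x = 0 := by
      have h1 := hmu x hxΦ
      rw [← copair_eq_zero_iff R hxΦ] at h1
      rw [copair_sub_left, copair_sub_left, copair_smul_left, copair_smul_left,
        copair_smul_left] at h1
      linarith
    rw [copair_neg_right, copair_neg_right, hlamfix, hrho, hwprho,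
      copair_sub_left, copair_smul_left]
    linear_combination (-1 : ℝ) * h0
  rw [Set.image_image]
  ext f
  constructor
  · rintro ⟨x, hx, rfl⟩
    exact ⟨-(wp.symm x), (hmem x).mp hx, by funext s; exact hfun x hx s⟩
  · rintro ⟨y, hy, rfl⟩
    have hβy : -(wp.symm (-(wp y))) = y := by
      rw [map_neg, wp.symm_apply_apply, neg_neg]
    have hx : (-(wp y)) ∈ (⇑w ⁻¹' A) \ (↑R.Δ \ {αp}) := by
      refine (hmem (-(wp y))).mpr ?_
      rw [hβy]
      exact hy
    refine ⟨-(wp y), hx, ?_⟩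
    funext s
    have h2 := hfun (-(wp y)) hx s
    rw [hβy] at h2
    exact h2.symm

open RootSystemBase Classical in
/-- Involution symmetry of the sets of affine-linear functions
`S_{p,A}(s; w) = {s ↦ ⟨λ_p, α^∨⟩ s + ⟨ρ, α^∨⟩ : α ∈ (w⁻¹A) \ Δ_p}`:
for `A = Δ` or `A = Φ⁻`, `S_{p,A}(-c_p - s; w) = S_{p,A}(s; w₀ w w_p)`. -/
theorem S_involution {V : Type*} [NormedAddCommGroup V]
    [InnerProductSpace ℝ V] (R : RootSystemBase V) (αp : V) (hαp : αp ∈ R.Δ)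
    (lam ρ ρp : V)
    (hlam : ∀ β ∈ R.Δ, copair lam β = if β = αp then 1 else 0)
    (hρ : ρ = (2⁻¹ : ℝ) • ∑ᶠ α ∈ R.posRoots, α)
    (hρp : ρp = (2⁻¹ : ℝ) • ∑ᶠ α ∈ R.posRoots ∩ R.paraRoots αp, α)
    (w₀ wp : V ≃ₗ[ℝ] V) (hw₀ : R.IsLongest w₀) (hwp : R.IsParaLongest αp wp)
    (cp : ℝ) (hcp : cp = 2 * copair (lam - ρp) αp)
    (w : V ≃ₗ[ℝ] V) (hw : w ∈ R.weylGroup)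
    (A : Set V) (hA : A = ↑R.Δ ∨ A = R.negRoots) :
    (fun f : ℝ → ℝ => fun s => f (-cp - s)) ''
        ((fun α => fun s : ℝ => copair lam α * s + copair ρ α) ''
          ((⇑w ⁻¹' A) \ (↑R.Δ \ {αp})))
      = (fun α => fun s : ℝ => copair lam α * s + copair ρ α) ''
          ((⇑(w₀ * w * wp) ⁻¹' A) \ (↑R.Δ \ {αp})) := by
  exact S_involution' R αp hαp lam ρ ρp hlam hρ hρp w₀ wp hw₀ hwp cp hcp w hw A hA
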